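/- (Optimal Path Extension, Theorem 1.) Let L = P ++ M be a duplicate-free list enumerating all variables, let U be the set of elements of the prefix P, and let x be a variable occurring in M. If U is a superset of an optimal parents set of x, i.e. d(x, U) = d(x, univ \ {x}), then the list P ++ [x] ++ (M with x erased), obtained by moving x to immediately after the prefix P, is a duplicate-free enumeration of all variables and satisfies Q(P ++ [x] ++ (M.erase x)) ≤ Q(L). Hence any optimal path from the lattice node U to the sink may be taken to pass through the node U ∪ {x}. -/

import Mathlib

/-- `d s x U` : the score of selecting optimal parents of `x` from `U`,
defined as the minimum of `s x W` over all subsets `W ⊆ U`. -/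
noncomputable def d {X : Type*} [DecidableEq X] (s : X → Finset X → ℝ)
    (x : X) (U : Finset X) : ℝ :=
  U.powerset.inf' (Finset.powerset_nonempty U) (s x)

/-- `Qfrom s M U` : the cost of extending the lattice node `U` along the
ordering `M`, i.e. `Σ_k d(M_k, U ∪ S_k)` where `S_k` is the set of entries
of `M` preceding position `k`. -/
noncomputable def Qfrom {X : Type*} [DecidableEq X] (s : X → Finset X → ℝ) :
    List X → Finset X → ℝ
  | [], _ => 0
  | x :: M, U => d s x U + Qfrom s M (insert x U)

/-- `Q s L` : the cost of the ordering `L`, i.e. `Σ_k d(L_k, S_k)` where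
`S_k` is the set of entries of `L` preceding position `k`; this is the score
of the network in which each variable's parents are chosen optimally from
its predecessors in `L`. -/
noncomputable def Q {X : Type*} [DecidableEq X] (s : X → Finset X → ℝ)
    (L : List X) : ℝ :=
  Qfrom s L ∅

lemma d_anti {X : Type*} [DecidableEq X] (s : X → Finset X → ℝ) (x : X)
    {U V : Finset X} (h : U ⊆ V) : d s x V ≤ d s x U := by
  apply Finset.le_inf'
  intro W hW
  exact Finset.inf'_le _ (Finset.mem_powerset.2 ((Finset.mem_powerset.1 hW).trans h))

lemma Qfrom_anti {X : Type*} [DecidableEq X] (s : X → Finset X → ℝ) :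
    ∀ (M : List X) {U V : Finset X}, U ⊆ V → Qfrom s M V ≤ Qfrom s M U
  | [], _, _, _ => le_refl _
  | y :: M, U, V, h => by
    simp only [Qfrom]
    exact add_le_add (d_anti s y h) (Qfrom_anti s M (Finset.insert_subset_insert y h))

lemma Qfrom_append {X : Type*} [DecidableEq X] (s : X → Finset X → ℝ) :
    ∀ (A B : List X) (U : Finset X),
      Qfrom s (A ++ B) U = Qfrom s A U + Qfrom s B (U ∪ A.toFinset)
  | [], B, U => by simp [Qfrom]
  | a :: A, B, U => by
    simp only [List.cons_append, Qfrom]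
    rw [Qfrom_append s A B (insert a U),
      Finset.insert_union, List.toFinset_cons, Finset.union_insert, add_assoc]

lemma Qfrom_move_key {X : Type*} [Fintype X] [DecidableEq X] (s : X → Finset X → ℝ) (x : X) :
    ∀ (M : List X) (U : Finset X), x ∈ M → x ∉ U →
      d s x U = d s x (Finset.univ \ {x}) →
      Qfrom s (x :: M.erase x) U ≤ Qfrom s M U := by
  intro M
  induction M with
  | nil => intro U h; simp at h
  | cons y M ih =>
    intro U hmem hxU hopt
    by_cases hxy : x = y
    · subst hxy; simp [List.erase_cons_head]
    · have hxM : x ∈ M := by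
        rcases List.mem_cons.1 hmem with h | h
        · exact absurd h hxy
        · exact h
      rw [List.erase_cons_tail (by simpa using (Ne.symm hxy))]
      simp only [Qfrom]
      have hsub : insert y U ⊆ Finset.univ \ {x} := by
        intro z hz
        simp only [Finset.mem_sdiff, Finset.mem_univ, Finset.mem_singleton, true_and]
        rcases Finset.mem_insert.1 hz with rfl | hz
        · exact Ne.symm hxy
        · rintro rfl; exact hxU hz
      have hopt' : d s x (insert y U) = d s x (Finset.univ \ {x}) :=
        le_antisymm (hopt ▸ d_anti s x (Finset.subset_insert y U))
          (d_anti s x hsub)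
      have hIH := ih (insert y U) hxM
        (by simp [Finset.mem_insert, hxy, hxU]) hopt'
      simp only [Qfrom] at hIH
      have h1 : d s x U ≤ d s x (insert y U) := by
        rw [hopt]; exact d_anti s x hsub
      have h2 : d s y (insert x U) ≤ d s y U := d_anti s y (Finset.subset_insert x U)
      rw [Finset.insert_comm]
      linarith

/-- Optimal path extension (Theorem 1): if `P ++ M` is a duplicate-free
enumeration of all variables, `x` occurs in `M`, and the prefix set
`U = P.toFinset` is a superset of an optimal parents set of `x`, then moving
`x` to immediately after `P` yields a duplicate-free enumeration of all
variables whose score is no worse. -/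
theorem optimal_path_extension
    {X : Type*} [Fintype X] [DecidableEq X] [Nonempty X]
    (s : X → Finset X → ℝ) (P M : List X) (x : X)
    (hnodup : (P ++ M).Nodup)
    (henum : ∀ z : X, z ∈ P ++ M)
    (hxM : x ∈ M)
    (hx : x ∉ P.toFinset)
    (hopt : d s x P.toFinset = d s x (Finset.univ \ {x})) :
    (P ++ [x] ++ M.erase x).Nodup ∧
    (∀ z : X, z ∈ P ++ [x] ++ M.erase x) ∧
    Q s (P ++ [x] ++ M.erase x) ≤ Q s (P ++ M) := by
  have hperm : (P ++ [x] ++ M.erase x).Perm (P ++ M) := by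
    rw [List.append_assoc, List.singleton_append]
    exact List.Perm.append_left P (List.perm_cons_erase hxM).symm
  refine ⟨hperm.symm.nodup hnodup, fun z => hperm.mem_iff.2 (henum z), ?_⟩
  unfold Q
  rw [List.append_assoc, Qfrom_append, Qfrom_append s P M, List.singleton_append]
  simp only [Finset.empty_union]
  exact add_le_add le_rfl (Qfrom_move_key s x M P.toFinset hxM hx hopt)
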